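/- Let n, k, r be integers with k, r ≥ 2 and n ≥ k + r, let H be a vertex-k-maximal r-uniform hypergraph on n vertices with separation triple (S, H_1, H_2), and define E_1 = {e ∈ E((H[S])^c) : κ̄(H_1 + e) = k} and E_2 = {e ∈ E((H[S])^c) : κ̄(H_2 + e) = k}. Then E_1 ∩ E_2 = ∅. -/

import Mathlib

/-- A finite hypergraph: a finite vertex set together with a finite set of
non-empty edges, each a subset of the vertex set. -/
structure FinHypergraph where
  verts : Finset ℕ
  edges : Finset (Finset ℕ)
  edge_sub : ∀ e ∈ edges, e ⊆ verts
  edge_nonempty : ∀ e ∈ edges, e.Nonempty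

namespace FinHypergraph

/-- `H` is `r`-uniform if every edge has cardinality `r`. -/
def IsUniform (H : FinHypergraph) (r : ℕ) : Prop := ∀ e ∈ H.edges, e.card = r

/-- `H'` is a subhypergraph of `H`. -/
def IsSub (H' H : FinHypergraph) : Prop := H'.verts ⊆ H.verts ∧ H'.edges ⊆ H.edges

/-- Two vertices are adjacent if some edge contains both. -/
def Adj (H : FinHypergraph) (u v : ℕ) : Prop := ∃ e ∈ H.edges, u ∈ e ∧ v ∈ e

/-- `H` is connected if every pair of vertices is joined by a path
(equivalently, a walk, i.e. is reachable via the adjacency relation). -/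
def Connected (H : FinHypergraph) : Prop :=
  ∀ u ∈ H.verts, ∀ v ∈ H.verts, Relation.ReflTransGen H.Adj u v

/-- The subhypergraph of `H` induced by the vertex set `Y`. -/
def induce (H : FinHypergraph) (Y : Finset ℕ) : FinHypergraph where
  verts := H.verts ∩ Y
  edges := H.edges.filter (fun e => e ⊆ Y)
  edge_sub := by
    intro e he
    simp only [Finset.mem_filter] at he
    exact Finset.subset_inter (H.edge_sub e he.1) he.2
  edge_nonempty := by
    intro e he
    simp only [Finset.mem_filter] at he
    exact H.edge_nonempty e he.1

/-- `X` is a vertex-cut of `H` if deleting `X` leaves a disconnected hypergraph. -/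
def IsVertexCut (H : FinHypergraph) (X : Finset ℕ) : Prop :=
  X ⊆ H.verts ∧ ¬ (H.induce (H.verts \ X)).Connected

open Classical in
/-- The vertex-connectivity of `H`: the minimum cardinality of a vertex-cut if one
exists, and `|V(H)| - 1` otherwise. -/
noncomputable def kappa (H : FinHypergraph) : ℕ :=
  if ∃ X, H.IsVertexCut X then sInf {m | ∃ X, H.IsVertexCut X ∧ X.card = m}
  else H.verts.card - 1

/-- `κ̄(H)`: the maximum vertex-connectivity over all subhypergraphs of `H`. -/
noncomputable def kappaBar (H : FinHypergraph) : ℕ :=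
  sSup {m | ∃ H' : FinHypergraph, H'.IsSub H ∧ H'.kappa = m}

/-- `H + e`: add the edge `e` (a non-empty subset of the vertices) to `H`. -/
def addEdge (H : FinHypergraph) (e : Finset ℕ) : FinHypergraph where
  verts := H.verts
  edges := if e ⊆ H.verts ∧ e.Nonempty then insert e H.edges else H.edges
  edge_sub := by
    intro f hf
    split at hf
    · rcases Finset.mem_insert.mp hf with rfl | hf
      · exact (by assumption : f ⊆ H.verts ∧ f.Nonempty).1
      · exact H.edge_sub f hf
    · exact H.edge_sub f hf
  edge_nonempty := by
    intro f hf
    split at hf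
    · rcases Finset.mem_insert.mp hf with rfl | hf
      · exact (by assumption : f ⊆ H.verts ∧ f.Nonempty).2
      · exact H.edge_nonempty f hf
    · exact H.edge_nonempty f hf

/-- `H + F`: add a set `F` of edges to `H`. -/
def addEdges (H : FinHypergraph) (F : Finset (Finset ℕ)) : FinHypergraph where
  verts := H.verts
  edges := H.edges ∪ F.filter (fun e => e ⊆ H.verts ∧ e.Nonempty)
  edge_sub := by
    intro f hf
    rcases Finset.mem_union.mp hf with hf | hf
    · exact H.edge_sub f hf
    · exact (Finset.mem_filter.mp hf).2.1
  edge_nonempty := by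
    intro f hf
    rcases Finset.mem_union.mp hf with hf | hf
    · exact H.edge_nonempty f hf
    · exact (Finset.mem_filter.mp hf).2.2

/-- `H` is vertex-`k`-maximal (as an `r`-uniform hypergraph): `κ̄(H) ≤ k`, but adding
any edge of the complement `H^c` creates a subhypergraph of connectivity at least `k + 1`. -/
def VertexKMaximal (H : FinHypergraph) (r k : ℕ) : Prop :=
  H.IsUniform r ∧ H.kappaBar ≤ k ∧
    ∀ e : Finset ℕ, e ⊆ H.verts → e.card = r → e ∉ H.edges →
      k + 1 ≤ (H.addEdge e).kappaBar

/-- The complete `r`-uniform hypergraph on the vertex set `V`. -/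
def completeHG (V : Finset ℕ) (r : ℕ) : FinHypergraph where
  verts := V
  edges := (V.powersetCard r).filter (fun e => e.Nonempty)
  edge_sub := by
    intro e he
    simp only [Finset.mem_filter, Finset.mem_powersetCard] at he
    exact he.1.1
  edge_nonempty := by
    intro e he
    exact (Finset.mem_filter.mp he).2

/-- The hypergraph on vertex set `V` with no edges. -/
def emptyHG (V : Finset ℕ) : FinHypergraph where
  verts := V
  edges := ∅
  edge_sub := by simp
  edge_nonempty := by simp

/-- The `r`-join `H₁ ∨_r H₂`: the union of `H₁` and `H₂` together with all
`r`-element subsets of `V(H₁) ∪ V(H₂)` meeting both `V(H₁)` and `V(H₂)`. -/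
def rJoin (H1 H2 : FinHypergraph) (r : ℕ) : FinHypergraph where
  verts := H1.verts ∪ H2.verts
  edges := H1.edges ∪ H2.edges ∪
    ((H1.verts ∪ H2.verts).powersetCard r).filter
      (fun e => (e ∩ H1.verts).Nonempty ∧ (e ∩ H2.verts).Nonempty)
  edge_sub := by
    intro e he
    rcases Finset.mem_union.mp he with he | he
    · rcases Finset.mem_union.mp he with he | he
      · exact (H1.edge_sub e he).trans Finset.subset_union_left
      · exact (H2.edge_sub e he).trans Finset.subset_union_right
    · exact (Finset.mem_powersetCard.mp (Finset.mem_filter.mp he).1).1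
  edge_nonempty := by
    intro e he
    rcases Finset.mem_union.mp he with he | he
    · rcases Finset.mem_union.mp he with he | he
      · exact H1.edge_nonempty e he
      · exact H2.edge_nonempty e he
    · obtain ⟨x, hx⟩ := (Finset.mem_filter.mp he).2.1
      exact ⟨x, (Finset.mem_inter.mp hx).1⟩

/-- The union of two hypergraphs. -/
def hUnion (H1 H2 : FinHypergraph) : FinHypergraph where
  verts := H1.verts ∪ H2.verts
  edges := H1.edges ∪ H2.edges
  edge_sub := by
    intro e he
    rcases Finset.mem_union.mp he with he | he
    · exact (H1.edge_sub e he).trans Finset.subset_union_left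
    · exact (H2.edge_sub e he).trans Finset.subset_union_right
  edge_nonempty := by
    intro e he
    rcases Finset.mem_union.mp he with he | he
    · exact H1.edge_nonempty e he
    · exact H2.edge_nonempty e he

/-- The union of the hypergraphs `f 0, …, f (m-1)`. -/
def unionOver (m : ℕ) (f : ℕ → FinHypergraph) : FinHypergraph where
  verts := (Finset.range m).biUnion (fun i => (f i).verts)
  edges := (Finset.range m).biUnion (fun i => (f i).edges)
  edge_sub := by
    intro e he
    obtain ⟨i, hi, hei⟩ := Finset.mem_biUnion.mp he
    exact ((f i).edge_sub e hei).trans (Finset.subset_biUnion_of_mem (fun i => (f i).verts) hi)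
  edge_nonempty := by
    intro e he
    obtain ⟨i, _, hei⟩ := Finset.mem_biUnion.mp he
    exact (f i).edge_nonempty e hei

/-- `C` is a component of `G`: a maximal connected subhypergraph. -/
def IsComponent (G C : FinHypergraph) : Prop :=
  C.IsSub G ∧ C.Connected ∧
    ∀ C' : FinHypergraph, C'.IsSub G → C'.Connected → C.IsSub C' → C' = C

/-- `(S, H₁, H₂)` is a separation triple of `H`: `S` is a minimum vertex-cut,
`H₁ = H[S ∪ V(C₁)]` and `H₂ = H[S ∪ V(C₂)]`, where `C₁` is a component of `H - S`
and `C₂ = H - (S ∪ V(C₁))`. -/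
def IsSeparationTriple (H : FinHypergraph) (S : Finset ℕ) (H1 H2 : FinHypergraph) : Prop :=
  H.IsVertexCut S ∧ (∀ X : Finset ℕ, H.IsVertexCut X → S.card ≤ X.card) ∧
    ∃ C1 : FinHypergraph, IsComponent (H.induce (H.verts \ S)) C1 ∧
      H1 = H.induce (S ∪ C1.verts) ∧
      H2 = H.induce (S ∪ (H.verts \ (S ∪ C1.verts)))

lemma adj_mono {G G' : FinHypergraph} (h : G.edges ⊆ G'.edges) {u v : ℕ}
    (ha : G.Adj u v) : G'.Adj u v := by
  obtain ⟨f, hf, h1, h2⟩ := ha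
  exact ⟨f, h hf, h1, h2⟩

lemma adj_symm (G : FinHypergraph) : Symmetric G.Adj := by
  rintro a b ⟨f, hf, h1, h2⟩; exact ⟨f, hf, h2, h1⟩

lemma kappa_le_card (G : FinHypergraph) : G.kappa ≤ G.verts.card := by
  unfold kappa
  split
  · next h =>
    obtain ⟨X, hX⟩ := h
    exact le_trans (Nat.sInf_le ⟨X, hX, rfl⟩) (Finset.card_le_card hX.1)
  · exact Nat.sub_le _ _

lemma bddAbove_kappaBarSet (G : FinHypergraph) :
    BddAbove {m | ∃ H' : FinHypergraph, H'.IsSub G ∧ H'.kappa = m} := by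
  refine ⟨G.verts.card, ?_⟩
  rintro m ⟨H', hsub, rfl⟩
  exact le_trans H'.kappa_le_card (Finset.card_le_card hsub.1)

lemma isSub_refl (G : FinHypergraph) : G.IsSub G := ⟨subset_rfl, subset_rfl⟩

lemma kappa_le_kappaBar {K G : FinHypergraph} (h : K.IsSub G) : K.kappa ≤ G.kappaBar :=
  le_csSup G.bddAbove_kappaBarSet ⟨K, h, rfl⟩

lemma exists_max_sub (G : FinHypergraph) :
    ∃ K : FinHypergraph, K.IsSub G ∧ K.kappa = G.kappaBar := by
  have h := Nat.sSup_mem (s := {m | ∃ H' : FinHypergraph, H'.IsSub G ∧ H'.kappa = m})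
    ⟨G.kappa, G, G.isSub_refl, rfl⟩ G.bddAbove_kappaBarSet
  obtain ⟨K, hK, hk⟩ := h
  exact ⟨K, hK, hk⟩

/-- If an edge of `G` meets a component `C` of `G`, it is contained in `C`. -/
lemma component_edge {G C : FinHypergraph} (hC : IsComponent G C) {f : Finset ℕ}
    (hf : f ∈ G.edges) {w : ℕ} (hw : w ∈ f) (hwC : w ∈ C.verts) : f ⊆ C.verts := by
  set C' : FinHypergraph :=
    { verts := C.verts ∪ f
      edges := insert f C.edges
      edge_sub := by
        intro g hg
        rcases Finset.mem_insert.mp hg with rfl | hg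
        · exact Finset.subset_union_right
        · exact (C.edge_sub g hg).trans Finset.subset_union_left
      edge_nonempty := by
        intro g hg
        rcases Finset.mem_insert.mp hg with rfl | hg
        · exact G.edge_nonempty g hf
        · exact C.edge_nonempty g hg } with hC'def
  have hsub : C'.IsSub G := by
    constructor
    · exact Finset.union_subset hC.1.1 (G.edge_sub f hf)
    · intro g hg
      rcases Finset.mem_insert.mp hg with rfl | hg
      · exact hf
      · exact hC.1.2 hg
  have hCedges : C.edges ⊆ C'.edges := Finset.subset_insert _ _
  have reach_w : ∀ x ∈ C'.verts, Relation.ReflTransGen C'.Adj x w := by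
    intro x hx
    rcases Finset.mem_union.mp hx with hx | hx
    · exact Relation.ReflTransGen.mono (fun a b => adj_mono hCedges) _ _ (hC.2.1 x hx w hwC)
    · exact Relation.ReflTransGen.single ⟨f, Finset.mem_insert_self f _, hx, hw⟩
  have hconn : C'.Connected := by
    intro u hu v hv
    exact (reach_w u hu).trans
      ((@Relation.ReflTransGen.stdSymm _ _ ⟨fun a b h => C'.adj_symm h⟩).symm _ _ (reach_w v hv))
  have heq : C' = C := hC.2.2 C' hsub hconn ⟨Finset.subset_union_left, hCedges⟩
  have : C'.verts = C.verts := by rw [heq]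
  intro z hz
  rw [← this]
  exact Finset.mem_union_right _ hz

end FinHypergraph

/-- With a separation triple `(S, H₁, H₂)` of a vertex-`k`-maximal
`r`-uniform hypergraph `H`, the sets `E₁ = {e ∈ E((H[S])^c) : κ̄(H₁ + e) = k}` and
`E₂ = {e ∈ E((H[S])^c) : κ̄(H₂ + e) = k}` are disjoint. -/
theorem stmt_14 (n k r : ℕ) (hk : 2 ≤ k) (hr : 2 ≤ r) (hn : k + r ≤ n)
    (H : FinHypergraph) (hcard : H.verts.card = n) (hH : H.VertexKMaximal r k)
    (S : Finset ℕ) (H1 H2 : FinHypergraph) (hsep : H.IsSeparationTriple S H1 H2) :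
    {e : Finset ℕ | (e ⊆ S ∧ e.card = r ∧ e ∉ (H.induce S).edges) ∧
        (H1.addEdge e).kappaBar = k} ∩
      {e : Finset ℕ | (e ⊆ S ∧ e.card = r ∧ e ∉ (H.induce S).edges) ∧
        (H2.addEdge e).kappaBar = k} = ∅ := by
  rw [Set.eq_empty_iff_forall_notMem]
  rintro e ⟨⟨⟨heS, her, henind⟩, hk1⟩, ⟨-, hk2⟩⟩
  obtain ⟨hScut, hSmin, C1, hC1comp, hH1, hH2⟩ := hsep
  have heV : e ⊆ H.verts := heS.trans hScut.1
  have hene : e.Nonempty := Finset.card_pos.mp (by omega)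
  have heH : e ∉ H.edges := by
    intro h
    exact henind (Finset.mem_filter.mpr ⟨h, heS⟩)
  have hmax : k + 1 ≤ (H.addEdge e).kappaBar := hH.2.2 e heV her heH
  obtain ⟨K, hKsub, hKkappa⟩ := (H.addEdge e).exists_max_sub
  have hKge : k + 1 ≤ K.kappa := by omega
  -- edges of H + e
  have hadde : (H.addEdge e).edges = insert e H.edges := by
    simp only [FinHypergraph.addEdge]
    rw [if_pos ⟨heV, hene⟩]
  have hKV : K.verts ⊆ H.verts := hKsub.1
  -- |S| ≤ k
  have hSk : S.card ≤ k := by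
    have hone : H.kappa ≤ k := le_trans (FinHypergraph.kappa_le_kappaBar H.isSub_refl) hH.2.1
    have hex : ∃ X, H.IsVertexCut X := ⟨S, hScut⟩
    have hkap : H.kappa = sInf {m | ∃ X, H.IsVertexCut X ∧ X.card = m} := by
      unfold FinHypergraph.kappa
      rw [if_pos hex]
    have hmem : sInf {m | ∃ X, H.IsVertexCut X ∧ X.card = m} ∈
        {m | ∃ X, H.IsVertexCut X ∧ X.card = m} :=
      Nat.sInf_mem ⟨S.card, S, hScut, rfl⟩
    obtain ⟨X0, hX0, hc⟩ := hmem
    have := hSmin X0 hX0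
    omega
  -- C1's vertices avoid S
  have hC1V : C1.verts ⊆ H.verts \ S := by
    intro z hz
    have := hC1comp.1.1 hz
    exact (Finset.mem_inter.mp this).2
  set D : Finset ℕ := H.verts \ (S ∪ C1.verts) with hD
  -- if K fits in one side, contradiction with kappaBar (Hi + e) = k
  have key : ∀ T : Finset ℕ, e ⊆ T → K.verts ⊆ T →
      K.kappa ≤ ((H.induce T).addEdge e).kappaBar := by
    intro T heT hKT
    apply FinHypergraph.kappa_le_kappaBar
    constructor
    · show K.verts ⊆ H.verts ∩ T
      exact fun z hz => Finset.mem_inter.mpr ⟨hKV hz, hKT hz⟩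
    · intro f hf
      have hf' : f ∈ insert e H.edges := hadde ▸ hKsub.2 hf
      have heT' : e ⊆ H.verts ∩ T := fun z hz => Finset.mem_inter.mpr ⟨heV hz, heT hz⟩
      have haddT : ((H.induce T).addEdge e).edges = insert e (H.induce T).edges := by
        simp only [FinHypergraph.addEdge]
        rw [if_pos ⟨heT', hene⟩]
      rw [haddT]
      rcases Finset.mem_insert.mp hf' with rfl | hfH
      · exact Finset.mem_insert_self _ _
      · refine Finset.mem_insert_of_mem (Finset.mem_filter.mpr ⟨hfH, ?_⟩)
        exact (K.edge_sub f hf).trans hKT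
  by_cases h1e : (K.verts ∩ C1.verts).Nonempty
  · by_cases h2e : (K.verts ∩ D).Nonempty
    · -- K meets both sides: S ∩ K.verts is a small cut of K, contradiction
      obtain ⟨a, ha⟩ := h1e
      obtain ⟨b, hb⟩ := h2e
      have haK : a ∈ K.verts := (Finset.mem_inter.mp ha).1
      have haC : a ∈ C1.verts := (Finset.mem_inter.mp ha).2
      have haS : a ∉ S := (Finset.mem_sdiff.mp (hC1V haC)).2
      have hbK : b ∈ K.verts := (Finset.mem_inter.mp hb).1
      have hbD : b ∈ D := (Finset.mem_inter.mp hb).2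
      have hbS : b ∉ S := fun h =>
        (Finset.mem_sdiff.mp hbD).2 (Finset.mem_union_left _ h)
      have hbC : b ∉ C1.verts := fun h =>
        (Finset.mem_sdiff.mp hbD).2 (Finset.mem_union_right _ h)
      set X : Finset ℕ := S ∩ K.verts with hX
      have hXcut : K.IsVertexCut X := by
        constructor
        · exact Finset.inter_subset_right
        · intro hconn
          have haY : a ∈ (K.induce (K.verts \ X)).verts := by
            refine Finset.mem_inter.mpr ⟨haK, Finset.mem_sdiff.mpr ⟨haK, fun h => ?_⟩⟩
            exact haS (Finset.mem_inter.mp h).1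
          have hbY : b ∈ (K.induce (K.verts \ X)).verts := by
            refine Finset.mem_inter.mpr ⟨hbK, Finset.mem_sdiff.mpr ⟨hbK, fun h => ?_⟩⟩
            exact hbS (Finset.mem_inter.mp h).1
          have hreach := hconn a haY b hbY
          have hinv : ∀ x, Relation.ReflTransGen (K.induce (K.verts \ X)).Adj a x →
              x ∈ C1.verts := by
            intro x hx
            induction hx with
            | refl => exact haC
            | tail _ hadj ih =>
              obtain ⟨f, hfmem, hcf, hxf⟩ := hadj
              have hfK : f ∈ K.edges := (Finset.mem_filter.mp hfmem).1
              have hfsub : f ⊆ K.verts \ X := (Finset.mem_filter.mp hfmem).2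
              have hf' : f ∈ insert e H.edges := hadde ▸ hKsub.2 hfK
              have hfne : f ≠ e := by
                rintro rfl
                exact (Finset.mem_sdiff.mp (hC1V ih)).2 (heS hcf)
              have hfH : f ∈ H.edges := by
                rcases Finset.mem_insert.mp hf' with rfl | h
                · exact absurd rfl hfne
                · exact h
              have hfVS : f ⊆ H.verts \ S := by
                intro z hz
                refine Finset.mem_sdiff.mpr ⟨H.edge_sub f hfH hz, fun hzS => ?_⟩
                have hzK := Finset.mem_sdiff.mp (hfsub hz)
                exact hzK.2 (Finset.mem_inter.mpr ⟨hzS, hzK.1⟩)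
              have hfG : f ∈ (H.induce (H.verts \ S)).edges :=
                Finset.mem_filter.mpr ⟨hfH, hfVS⟩
              exact FinHypergraph.component_edge hC1comp hfG hcf ih hxf
          exact hbC (hinv b hreach)
      have hKcut : K.kappa ≤ X.card := by
        unfold FinHypergraph.kappa
        rw [if_pos ⟨X, hXcut⟩]
        exact Nat.sInf_le ⟨X, hXcut, rfl⟩
      have hXS : X.card ≤ S.card := Finset.card_le_card Finset.inter_subset_left
      omega
    · -- K avoids D: K ⊆ H1 + e
      have hKT : K.verts ⊆ S ∪ C1.verts := by
        intro z hz
        by_contra hzn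
        have : z ∈ D := Finset.mem_sdiff.mpr ⟨hKV hz, hzn⟩
        exact h2e ⟨z, Finset.mem_inter.mpr ⟨hz, this⟩⟩
      have := key (S ∪ C1.verts) (heS.trans Finset.subset_union_left) hKT
      rw [← hH1] at this
      omega
  · -- K avoids C1: K ⊆ H2 + e
    have hKT : K.verts ⊆ S ∪ D := by
      intro z hz
      by_cases hzS : z ∈ S
      · exact Finset.mem_union_left _ hzS
      · refine Finset.mem_union_right _ (Finset.mem_sdiff.mpr ⟨hKV hz, fun h => ?_⟩)
        rcases Finset.mem_union.mp h with h | h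
        · exact hzS h
        · exact h1e ⟨z, Finset.mem_inter.mpr ⟨hz, h⟩⟩
    have := key (S ∪ D) (heS.trans Finset.subset_union_left) hKT
    rw [← hH2] at this
    omega
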